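/- Let ψ be a nowhere-vanishing section of a Hermitian Clifford module over a hypersurface Σ with shape operator A and positive mean curvature H, satisfying H γ(X)ψ − γ(AX)ψ − (1/H)X(H)γ(N)ψ = 0 for all tangent vectors X, where γ(X) is skew-adjoint, γ(X)² = −|X|² Id, and γ(X)γ(N) + γ(N)γ(X) = 0 for X tangent. Then A = H·Id, i.e. Σ is totally umbilical. -/

import Mathlib

/-- Let `ψ ≠ 0` be a vector of a Hermitian Clifford module over (the
tangent space at a point of) a hypersurface `Σ`, with Clifford multiplication `γ`
(skew-adjoint, `γ(x)² = -‖x‖² Id`, anticommuting with `γ(N)`), symmetric shape operator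
`A`, mean curvature `H > 0`, and suppose
`H γ(x) ψ - γ(A x) ψ - (1/H) dH(x) γ(N) ψ = 0` for all tangent vectors `x`.
Then `A = H · Id`, i.e. `Σ` is totally umbilical. -/
theorem stmt17 {E W : Type*} [NormedAddCommGroup E] [InnerProductSpace ℝ E]
    [FiniteDimensional ℝ E]
    [NormedAddCommGroup W] [InnerProductSpace ℂ W]
    (γ : E →ₗ[ℝ] (W →ₗ[ℂ] W)) (γN : W →ₗ[ℂ] W)
    (hskew : ∀ (x : E) (φ χ : W), (inner ℂ (γ x φ) χ : ℂ) = -inner ℂ φ (γ x χ))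
    (hNskew : ∀ (φ χ : W), (inner ℂ (γN φ) χ : ℂ) = -inner ℂ φ (γN χ))
    (hsq : ∀ x : E, γ x ∘ₗ γ x = -((‖x‖ : ℂ) ^ 2) • LinearMap.id)
    (hanti : ∀ x : E, γ x ∘ₗ γN + γN ∘ₗ γ x = 0)
    (A : E →ₗ[ℝ] E) (hAsym : ∀ x y : E, (inner ℝ (A x) y : ℝ) = inner ℝ x (A y))
    (H : ℝ) (hH : 0 < H)
    (dH : E →ₗ[ℝ] ℝ)
    (ψ : W) (hψ : ψ ≠ 0)
    (heq : ∀ x : E,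
      (H : ℂ) • γ x ψ - γ (A x) ψ - ((dH x / H : ℝ) : ℂ) • γN ψ = 0) :
    ∀ x : E, A x = H • x := by
  intro x
  set v : E := A x - H • x with hvdef
  set c : ℝ := dH x / H with hcdef
  have hzero := heq x
  have hv : γ v ψ = (-(c : ℂ)) • γN ψ := by
    have h1 : γ v = γ (A x) - H • γ x := by
      rw [hvdef, map_sub, map_smul]
    have h2 : γ v ψ = γ (A x) ψ - (H : ℂ) • γ x ψ := by
      rw [h1]
      simp [Complex.coe_smul]
    have h3 : (H : ℂ) • γ x ψ - γ (A x) ψ = (c : ℂ) • γN ψ := sub_eq_zero.mp hzero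
    rw [h2, neg_smul, ← h3]; abel
  -- anticommutation applied to ψ
  have hanti' : γ v (γN ψ) = - γN (γ v ψ) := by
    have h := congrArg (fun f => f ψ) (hanti v)
    simp only [LinearMap.add_apply, LinearMap.comp_apply, LinearMap.zero_apply] at h
    exact eq_neg_of_add_eq_zero_left h
  -- the inner product identity
  have key : (c : ℂ) * inner ℂ (γN ψ) (γN ψ) = 0 := by
    have e1 : (inner ℂ (γ v ψ) (γN ψ) : ℂ) = - inner ℂ (γN ψ) (γ v ψ) := by
      rw [hskew v ψ (γN ψ), hanti', inner_neg_right, neg_neg, ← neg_eq_iff_eq_neg,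
        ← hNskew ψ (γ v ψ)]
    rw [hv, inner_smul_left, inner_smul_right] at e1
    simp only [map_neg, Complex.conj_ofReal] at e1
    linear_combination -e1/2
  have hγNv : (-(c : ℂ)) • γN ψ = 0 := by
    rcases mul_eq_zero.mp key with h | h
    · rw [h, neg_zero, zero_smul]
    · rw [inner_self_eq_zero.mp h, smul_zero]
  have hγvψ : γ v ψ = 0 := by rw [hv, hγNv]
  have hsqv := congrArg (fun f => f ψ) (hsq v)
  simp only [LinearMap.comp_apply, LinearMap.neg_apply, LinearMap.smul_apply,
    LinearMap.id_apply, hγvψ, map_zero] at hsqv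
  have hnorm : ((‖v‖ : ℂ) ^ 2) • ψ = 0 := by
    rw [← neg_eq_zero, ← neg_smul]
    exact hsqv.symm
  have hv0 : v = 0 := by
    have h2 : ((‖v‖ : ℂ) ^ 2) = 0 := by
      by_contra h
      exact hψ (by simpa [h] using smul_eq_zero.mp hnorm |>.resolve_left h)
    have : (‖v‖ : ℂ) = 0 := by
      exact pow_eq_zero_iff (by norm_num) |>.mp h2
    have : ‖v‖ = 0 := by exact_mod_cast this
    exact norm_eq_zero.mp this
  have := sub_eq_zero.mp (hvdef ▸ hv0)
  -- v = A x - H • x = 0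
  rw [hvdef] at hv0
  exact sub_eq_zero.mp hv0
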